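/- For the instrumental-variables denominator: under the monotonicity assumption τ(δ,0) ≤ τ(δ,1) with τ binary-valued and I independent of δ, E(T|I=1) − E(T|I=0) = P(τ(δ,1) = 1 and τ(δ,0) = 0), where T = τ(δ,I). -/

import Mathlib

open MeasureTheory ProbabilityTheory

/-- The instrumental-variables denominator: under monotonicity
`τ(δ,0) ≤ τ(δ,1)` with `τ` binary-valued and `I` independent of `δ`,
`E(T|I=1) - E(T|I=0) = P(τ(δ,1) = 1 ∧ τ(δ,0) = 0)`, where `T = τ(δ,I)`. -/
theorem instrumental_variable_denominator
    {Ω Δ : Type*} [MeasurableSpace Ω] [MeasurableSpace Δ]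
    (μ : Measure Ω) [IsProbabilityMeasure μ]
    (I : Ω → Fin 2) (δ : Ω → Δ)
    (hI : Measurable I) (hδ : Measurable δ)
    (τ : Δ → Fin 2 → ℝ)
    (hτmeas : Measurable fun p : Δ × Fin 2 => τ p.1 p.2)
    (hτbin : ∀ d i, τ d i = 0 ∨ τ d i = 1)
    (hτmono : ∀ d, τ d 0 ≤ τ d 1)
    (T : Ω → ℝ) (hT : ∀ ω, T ω = τ (δ ω) (I ω))
    (hindep : IndepFun I δ μ)
    (hI1 : 0 < μ {ω | I ω = 1}) (hI0 : 0 < μ {ω | I ω = 0}) :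
    (∫ ω, T ω ∂μ[|{ω | I ω = 1}]) - ∫ ω, T ω ∂μ[|{ω | I ω = 0}]
      = (μ {ω | τ (δ ω) 1 = 1 ∧ τ (δ ω) 0 = 0}).toReal := by
  -- measurability of g i := ω ↦ τ (δ ω) i
  have hg : ∀ i : Fin 2, Measurable fun ω => τ (δ ω) i := by
    intro i
    exact (hτmeas.comp (measurable_id.prodMk measurable_const)).comp hδ
  have hgint : ∀ i : Fin 2, Integrable (fun ω => τ (δ ω) i) μ := by
    intro i
    refine (integrable_const (1 : ℝ)).mono' (hg i).aestronglyMeasurable ?_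
    filter_upwards with ω
    rcases hτbin (δ ω) i with h | h <;> simp [h]
  -- key: conditional expectation equals unconditional expectation of g i
  have key : ∀ i : Fin 2, 0 < μ {ω | I ω = i} →
      ∫ ω, T ω ∂μ[|{ω | I ω = i}] = ∫ ω, τ (δ ω) i ∂μ := by
    intro i hpos
    have hA : MeasurableSet {ω | I ω = i} := hI (measurableSet_singleton i)
    have hne : (μ {ω | I ω = i}).toReal ≠ 0 := by
      have := (measure_ne_top μ {ω | I ω = i})
      simp [ENNReal.toReal_ne_zero, hpos.ne', this]
    rw [ProbabilityTheory.cond, integral_smul_measure]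
    have h1 : ∫ ω in {ω | I ω = i}, T ω ∂μ = ∫ ω in {ω | I ω = i}, τ (δ ω) i ∂μ := by
      refine setIntegral_congr_fun hA ?_
      intro ω hω
      simp only [Set.mem_setOf_eq] at hω
      rw [hT, hω]
    rw [h1]
    have h2 : ∫ ω in {ω | I ω = i}, τ (δ ω) i ∂μ
        = ∫ ω, (fun x : Fin 2 => if x = i then (1:ℝ) else 0) (I ω) * τ (δ ω) i ∂μ := by
      rw [← integral_indicator hA]
      congr 1
      ext ω
      by_cases h : I ω = i <;> simp [Set.indicator, h]
    have hφ : Measurable fun x : Fin 2 => if x = i then (1:ℝ) else 0 :=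
      measurable_from_top
    have hψ : Measurable fun d => τ d i :=
      hτmeas.comp (measurable_id.prodMk measurable_const)
    have hIF : IndepFun (fun ω => (fun x : Fin 2 => if x = i then (1:ℝ) else 0) (I ω))
        (fun ω => τ (δ ω) i) μ := hindep.comp hφ hψ
    have h3 := hIF.integral_mul_eq_mul_integral ((hφ.comp hI).aestronglyMeasurable)
      ((hg i).aestronglyMeasurable)
    have h3' : ∫ ω, (fun x : Fin 2 => if x = i then (1:ℝ) else 0) (I ω) * τ (δ ω) i ∂μ
        = (∫ ω, (fun x : Fin 2 => if x = i then (1:ℝ) else 0) (I ω) ∂μ)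
          * ∫ ω, τ (δ ω) i ∂μ := h3
    rw [h2, h3']
    have h4 : ∫ ω, (fun x : Fin 2 => if x = i then (1:ℝ) else 0) (I ω) ∂μ
        = (μ {ω | I ω = i}).toReal := by
      have : (fun ω => (fun x : Fin 2 => if x = i then (1:ℝ) else 0) (I ω))
          = Set.indicator {ω | I ω = i} (fun _ => (1:ℝ)) := by
        ext ω; by_cases h : I ω = i <;> simp [Set.indicator, h]
      rw [this, integral_indicator_const _ hA]
      simp
      rfl
    rw [h4, smul_eq_mul, ENNReal.toReal_inv, ← mul_assoc, inv_mul_cancel₀ hne, one_mul]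
  rw [key 1 hI1, key 0 hI0, ← integral_sub (hgint 1) (hgint 0)]
  have hS : MeasurableSet {ω | τ (δ ω) 1 = 1 ∧ τ (δ ω) 0 = 0} := by
    have := ((hg 1) (measurableSet_singleton (1:ℝ))).inter
      ((hg 0) (measurableSet_singleton (0:ℝ)))
    convert this using 1
    rfl
  have hpt : (fun ω => τ (δ ω) 1 - τ (δ ω) 0)
      = Set.indicator {ω | τ (δ ω) 1 = 1 ∧ τ (δ ω) 0 = 0} (fun _ => (1:ℝ)) := by
    ext ω
    rcases hτbin (δ ω) 0 with h0 | h0 <;> rcases hτbin (δ ω) 1 with h1 | h1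
    · simp [Set.indicator, h0, h1]
    · simp [Set.indicator, h0, h1]
    · have := hτmono (δ ω); rw [h0, h1] at this; linarith
    · simp [Set.indicator, h0, h1]
  rw [hpt, integral_indicator_const _ hS]
  simp
  rfl
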